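/- Let n ≥ 2, let a ∈ ℝ, let w : {1,…,n} → ℝ be nonnegative weights with Σ_{i=1}^n w_i = 1, and let ψ : {1,…,n} → ℝ satisfy |ψ(r+1) − ψ(r)| ≤ C·r^{−1} for all integers 1 ≤ r ≤ n−1, where C ≥ 0. For each permutation π of {1,…,n} define q_π = σ(a + Σ_{i=1}^n w_i·ψ(π(i))), and let q̄ be the average of q_π over all n! permutations. Then E_π|q_π − q̄| ≤ (C/4)·H_{n−1}, where the expectation is the uniform average over all permutations. In particular the permutation-induced dispersion is O(log n). -/

import Mathlib

/-- The logistic (sigmoid) function `σ(t) = 1 / (1 + e^{-t})`. -/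
noncomputable def logistic (t : ℝ) : ℝ := 1 / (1 + Real.exp (-t))

/-- The `m`-th harmonic number `H_m = ∑_{k=1}^m 1/k`, with `H_0 = 0`. -/
noncomputable def harmonicR (m : ℕ) : ℝ := ∑ k ∈ Finset.range m, 1 / ((k : ℝ) + 1)

/-- The prediction under permutation `π`: `q_π = σ(a + ∑_i w_i·ψ(pos_π(i)))`, where the
position of chunk `i` in `{1,…,n}` is encoded as `(π i : ℕ) + 1`. -/
noncomputable def qperm (n : ℕ) (a : ℝ) (w : Fin n → ℝ) (ψ : ℕ → ℝ)
    (π : Equiv.Perm (Fin n)) : ℝ :=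
  logistic (a + ∑ i : Fin n, w i * ψ ((π i : ℕ) + 1))

lemma logistic_hasDerivAt (x : ℝ) :
    HasDerivAt logistic (Real.exp (-x) / (1 + Real.exp (-x)) ^ 2) x := by
  have h1 : HasDerivAt (fun t : ℝ => 1 + Real.exp (-t)) (-Real.exp (-x)) x := by
    have h := (Real.hasDerivAt_exp (-x)).comp x (hasDerivAt_neg x)
    simpa [mul_comm] using (h.const_add 1)
  have hne : (1 + Real.exp (-x)) ≠ 0 := by positivity
  have h2 := h1.inv hne
  have hfun : logistic = fun y => (1 + Real.exp (-y))⁻¹ := by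
    funext t; simp [logistic, one_div]
  rw [hfun]
  simpa [neg_neg, Pi.inv_def] using h2

lemma logistic_lip (x y : ℝ) : |logistic x - logistic y| ≤ |x - y| / 4 := by
  have key := Convex.norm_image_sub_le_of_norm_hasDerivWithin_le
    (f := logistic) (f' := fun z => Real.exp (-z) / (1 + Real.exp (-z)) ^ 2)
    (C := 1/4) (s := Set.univ)
    (fun z _ => (logistic_hasDerivAt z).hasDerivWithinAt)
    (fun z _ => by
      have he := Real.exp_pos (-z)
      rw [Real.norm_eq_abs, abs_of_nonneg (by positivity)]
      rw [div_le_iff₀ (by positivity)]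
      nlinarith [sq_nonneg (1 - Real.exp (-z))])
    convex_univ (Set.mem_univ y) (Set.mem_univ x)
  rw [Real.norm_eq_abs, Real.norm_eq_abs] at key
  linarith

lemma psi_telescope (C : ℝ) (ψ : ℕ → ℝ) (n : ℕ)
    (hreg : ∀ r : ℕ, 1 ≤ r → r ≤ n - 1 → |ψ (r + 1) - ψ r| ≤ C * ((r : ℝ))⁻¹) :
    ∀ r s : ℕ, 1 ≤ r → r ≤ s → s ≤ n →
      |ψ s - ψ r| ≤ ∑ k ∈ Finset.Ico r s, C * ((k : ℝ))⁻¹ := by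
  intro r s hr hrs hsn
  induction s, hrs using Nat.le_induction with
  | base => simp
  | succ s hs ih =>
    have hsn' : s ≤ n := le_trans (Nat.le_succ s) hsn
    have h1 : |ψ (s + 1) - ψ s| ≤ C * ((s : ℝ))⁻¹ :=
      hreg s (le_trans hr hs) (Nat.le_sub_one_of_lt hsn)
    have h2 := ih hsn'
    rw [Finset.sum_Ico_succ_top hs]
    calc |ψ (s + 1) - ψ r| ≤ |ψ s - ψ r| + |ψ (s + 1) - ψ s| := by
          have := abs_sub_abs_le_abs_sub (ψ (s+1) - ψ r) (ψ s - ψ r)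
          have := abs_add_le (ψ s - ψ r) (ψ (s+1) - ψ s)
          have heq : ψ (s+1) - ψ r = (ψ s - ψ r) + (ψ (s+1) - ψ s) := by ring
          rw [heq]; exact abs_add_le _ _
      _ ≤ (∑ k ∈ Finset.Ico r s, C * ((k : ℝ))⁻¹) + C * ((s : ℝ))⁻¹ := by
          exact add_le_add h2 h1

lemma psi_bound (C : ℝ) (hC : 0 ≤ C) (ψ : ℕ → ℝ) (n : ℕ) (hn : 2 ≤ n)
    (hreg : ∀ r : ℕ, 1 ≤ r → r ≤ n - 1 → |ψ (r + 1) - ψ r| ≤ C * ((r : ℝ))⁻¹)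
    (r s : ℕ) (hr : 1 ≤ r) (hrn : r ≤ n) (hs : 1 ≤ s) (hsn : s ≤ n) :
    |ψ s - ψ r| ≤ C * harmonicR (n - 1) := by
  have hIco : ∀ u v : ℕ, 1 ≤ u → v ≤ n →
      ∑ k ∈ Finset.Ico u v, C * ((k : ℝ))⁻¹ ≤ C * harmonicR (n - 1) := by
    intro u v hu hv
    have hsub : Finset.Ico u v ⊆ Finset.Ico 1 n := fun k hk => by
      simp only [Finset.mem_Ico] at *
      exact ⟨le_trans hu hk.1, lt_of_lt_of_le hk.2 hv⟩
    have h1 : ∑ k ∈ Finset.Ico u v, C * ((k : ℝ))⁻¹ ≤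
        ∑ k ∈ Finset.Ico 1 n, C * ((k : ℝ))⁻¹ :=
      Finset.sum_le_sum_of_subset_of_nonneg hsub (fun k _ _ => by positivity)
    have h2 : ∑ k ∈ Finset.Ico 1 n, C * ((k : ℝ))⁻¹ = C * harmonicR (n - 1) := by
      rw [Finset.sum_Ico_eq_sum_range, harmonicR, Finset.mul_sum]
      apply Finset.sum_congr rfl
      intro k _
      push_cast
      ring
    linarith
  rcases le_total r s with h | h
  · exact le_trans (psi_telescope C ψ n hreg r s hr h hsn) (hIco r s hr hsn)
  · rw [abs_sub_comm]
    exact le_trans (psi_telescope C ψ n hreg s r hs h hrn) (hIco s r hs hrn)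

/-- **Quantified Martingale Violation, harmonic decay (α = 1).**
Under the first-order positional sensitivity model with `(1, C)`-regular potential `ψ`,
the permutation-induced dispersion satisfies `E_π|q_π − q̄| ≤ (C/4)·H_{n−1} = O(log n)`. -/
theorem qmv_harmonic (n : ℕ) (hn : 2 ≤ n) (a : ℝ) (C : ℝ) (hC : 0 ≤ C)
    (w : Fin n → ℝ) (hw0 : ∀ i, 0 ≤ w i) (hw1 : ∑ i, w i = 1) (ψ : ℕ → ℝ)
    (hreg : ∀ r : ℕ, 1 ≤ r → r ≤ n - 1 → |ψ (r + 1) - ψ r| ≤ C * ((r : ℝ))⁻¹) :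
    (1 / (Nat.factorial n : ℝ)) *
        ∑ π : Equiv.Perm (Fin n),
          |qperm n a w ψ π -
            (1 / (Nat.factorial n : ℝ)) * ∑ π' : Equiv.Perm (Fin n), qperm n a w ψ π'| ≤
      (C / 4) * harmonicR (n - 1) := by
  have hNpos : (0:ℝ) < (Nat.factorial n : ℝ) := by
    exact_mod_cast Nat.factorial_pos n
  have hNne : (Nat.factorial n : ℝ) ≠ 0 := ne_of_gt hNpos
  have hcard : (Fintype.card (Equiv.Perm (Fin n)) : ℝ) = (Nat.factorial n : ℝ) := by
    rw [Fintype.card_perm, Fintype.card_fin]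
  have hH : 0 ≤ harmonicR (n - 1) :=
    Finset.sum_nonneg (fun k _ => by positivity)
  have hBnn : 0 ≤ (C / 4) * harmonicR (n - 1) :=
    mul_nonneg (by linarith) hH
  -- pairwise bound
  have pair : ∀ π π' : Equiv.Perm (Fin n),
      |qperm n a w ψ π - qperm n a w ψ π'| ≤ (C / 4) * harmonicR (n - 1) := by
    intro π π'
    unfold qperm
    refine le_trans (logistic_lip _ _) ?_
    have key : |(a + ∑ i : Fin n, w i * ψ ((π i : ℕ) + 1)) -
        (a + ∑ i : Fin n, w i * ψ ((π' i : ℕ) + 1))| ≤ C * harmonicR (n - 1) := by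
      have heq : (a + ∑ i : Fin n, w i * ψ ((π i : ℕ) + 1)) -
          (a + ∑ i : Fin n, w i * ψ ((π' i : ℕ) + 1)) =
          ∑ i : Fin n, w i * (ψ ((π i : ℕ) + 1) - ψ ((π' i : ℕ) + 1)) := by
        rw [Finset.sum_congr rfl (fun i _ => mul_sub (w i) _ _), Finset.sum_sub_distrib]
        ring
      rw [heq]
      calc |∑ i : Fin n, w i * (ψ ((π i : ℕ) + 1) - ψ ((π' i : ℕ) + 1))|
          ≤ ∑ i : Fin n, |w i * (ψ ((π i : ℕ) + 1) - ψ ((π' i : ℕ) + 1))| :=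
            Finset.abs_sum_le_sum_abs _ _
        _ ≤ ∑ i : Fin n, w i * (C * harmonicR (n - 1)) := by
            refine Finset.sum_le_sum (fun i _ => ?_)
            rw [abs_mul, abs_of_nonneg (hw0 i)]
            refine mul_le_mul_of_nonneg_left ?_ (hw0 i)
            exact psi_bound C hC ψ n hn hreg _ _ (Nat.succ_le_succ (Nat.zero_le _))
              (Nat.succ_le_of_lt (π' i).isLt) (Nat.succ_le_succ (Nat.zero_le _))
              (Nat.succ_le_of_lt (π i).isLt)
        _ = C * harmonicR (n - 1) := by
            rw [← Finset.sum_mul, hw1, one_mul]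
    calc |(a + ∑ i : Fin n, w i * ψ ((π i : ℕ) + 1)) -
        (a + ∑ i : Fin n, w i * ψ ((π' i : ℕ) + 1))| / 4
        ≤ (C * harmonicR (n - 1)) / 4 := by linarith
      _ = (C / 4) * harmonicR (n - 1) := by ring
  -- bound on deviation from mean
  have avg : ∀ π : Equiv.Perm (Fin n),
      |qperm n a w ψ π -
        (1 / (Nat.factorial n : ℝ)) * ∑ π' : Equiv.Perm (Fin n), qperm n a w ψ π'| ≤
      (C / 4) * harmonicR (n - 1) := by
    intro π
    have hrw : qperm n a w ψ π -
        (1 / (Nat.factorial n : ℝ)) * ∑ π' : Equiv.Perm (Fin n), qperm n a w ψ π' =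
        (1 / (Nat.factorial n : ℝ)) *
          ∑ π' : Equiv.Perm (Fin n), (qperm n a w ψ π - qperm n a w ψ π') := by
      rw [Finset.sum_sub_distrib, Finset.sum_const, Finset.card_univ, nsmul_eq_mul, hcard]
      field_simp
    rw [hrw, abs_mul, abs_of_nonneg (by positivity : (0:ℝ) ≤ 1 / (Nat.factorial n : ℝ))]
    have h1 : |∑ π' : Equiv.Perm (Fin n), (qperm n a w ψ π - qperm n a w ψ π')| ≤
        (Nat.factorial n : ℝ) * ((C / 4) * harmonicR (n - 1)) := by
      calc |∑ π' : Equiv.Perm (Fin n), (qperm n a w ψ π - qperm n a w ψ π')|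
          ≤ ∑ π' : Equiv.Perm (Fin n), |qperm n a w ψ π - qperm n a w ψ π'| :=
            Finset.abs_sum_le_sum_abs _ _
        _ ≤ ∑ _π' : Equiv.Perm (Fin n), (C / 4) * harmonicR (n - 1) :=
            Finset.sum_le_sum (fun π' _ => pair π π')
        _ = (Nat.factorial n : ℝ) * ((C / 4) * harmonicR (n - 1)) := by
            rw [Finset.sum_const, Finset.card_univ, nsmul_eq_mul, hcard]
    calc (1 / (Nat.factorial n : ℝ)) *
          |∑ π' : Equiv.Perm (Fin n), (qperm n a w ψ π - qperm n a w ψ π')|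
        ≤ (1 / (Nat.factorial n : ℝ)) *
            ((Nat.factorial n : ℝ) * ((C / 4) * harmonicR (n - 1))) :=
          mul_le_mul_of_nonneg_left h1 (by positivity)
      _ = (C / 4) * harmonicR (n - 1) := by field_simp
  calc (1 / (Nat.factorial n : ℝ)) *
        ∑ π : Equiv.Perm (Fin n),
          |qperm n a w ψ π -
            (1 / (Nat.factorial n : ℝ)) * ∑ π' : Equiv.Perm (Fin n), qperm n a w ψ π'|
      ≤ (1 / (Nat.factorial n : ℝ)) *
          ((Nat.factorial n : ℝ) * ((C / 4) * harmonicR (n - 1))) := by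
        refine mul_le_mul_of_nonneg_left ?_ (by positivity)
        calc ∑ π : Equiv.Perm (Fin n),
            |qperm n a w ψ π -
              (1 / (Nat.factorial n : ℝ)) * ∑ π' : Equiv.Perm (Fin n), qperm n a w ψ π'|
            ≤ ∑ _π : Equiv.Perm (Fin n), (C / 4) * harmonicR (n - 1) :=
              Finset.sum_le_sum (fun π _ => avg π)
          _ = (Nat.factorial n : ℝ) * ((C / 4) * harmonicR (n - 1)) := by
              rw [Finset.sum_const, Finset.card_univ, nsmul_eq_mul, hcard]
    _ = (C / 4) * harmonicR (n - 1) := by field_simp
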